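/- Composition theorem: let Y, W, Z be pointed metric spaces, u : Y → W an MS-Lipschitz p-summing operator, and v : W → Z an MS-strongly Lipschitz p-summing operator. Then the composition T = v ∘ u is MS-Lipschitz p-nuclear. -/

import Mathlib

open scoped TensorProduct
open NormedSpace Finset

noncomputable section

/-- The strong `ℓ_p^m` norm of a finite family in a normed space. -/
def strongLp {E : Type*} [NormedAddCommGroup E] (p : ℝ) {m : ℕ} (x : Fin m → E) : ℝ :=
  (∑ j, ‖x j‖ ^ p) ^ (1 / p)

/-- The weak `ℓ_p^{m,w}` norm of a finite family in a normed space. -/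
def weakLp {E : Type*} [NormedAddCommGroup E] [NormedSpace ℝ E] (p : ℝ) {m : ℕ}
    (x : Fin m → E) : ℝ :=
  sSup {r : ℝ | ∃ φ : StrongDual ℝ E, ‖φ‖ ≤ 1 ∧ r = (∑ j, |φ (x j)| ^ p) ^ (1 / p)}

/-- A continuous linear operator is `p`-summing. -/
def IsPSumming {E F : Type*} [NormedAddCommGroup E] [NormedSpace ℝ E]
    [NormedAddCommGroup F] [NormedSpace ℝ F] (p : ℝ) (u : E →L[ℝ] F) : Prop :=
  ∃ K > 0, ∀ (m : ℕ) (x : Fin m → E),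
    strongLp p (fun j => u (x j)) ≤ K * weakLp p x

/-- A continuous linear operator is (Cohen) strongly `p`-summing (`q` is the conjugate of `p`). -/
def IsStronglyPSumming {E F : Type*} [NormedAddCommGroup E] [NormedSpace ℝ E]
    [NormedAddCommGroup F] [NormedSpace ℝ F] (p q : ℝ) (u : E →L[ℝ] F) : Prop :=
  ∃ K > 0, ∀ (m : ℕ) (x : Fin m → E) (φ : Fin m → StrongDual ℝ F),
    ∑ j, |φ j (u (x j))| ≤ K * strongLp p x * weakLp q φ

/-- A continuous linear operator is (Cohen) `p`-nuclear (`q` is the conjugate of `p`). -/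
def IsPNuclear {E F : Type*} [NormedAddCommGroup E] [NormedSpace ℝ E]
    [NormedAddCommGroup F] [NormedSpace ℝ F] (p q : ℝ) (u : E →L[ℝ] F) : Prop :=
  ∃ K > 0, ∀ (m : ℕ) (x : Fin m → E) (φ : Fin m → StrongDual ℝ F),
    ∑ j, |φ j (u (x j))| ≤ K * weakLp p x * weakLp q φ

/-- The Chevet–Saphar norm `d_p` on a tensor product (`q` is the conjugate of `p`):
infimum over all finite representations of `z`. -/
def dpNorm {E G : Type*} [NormedAddCommGroup E] [NormedSpace ℝ E]
    [NormedAddCommGroup G] [NormedSpace ℝ G] (p q : ℝ) (z : TensorProduct ℝ E G) : ℝ :=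
  sInf {r : ℝ | ∃ (m : ℕ) (n : Fin m → E) (h : Fin m → G),
    z = ∑ j, n j ⊗ₜ[ℝ] h j ∧ r = weakLp p n * strongLp q h}

/-- The Chevet–Saphar norm `g_p` on a tensor product (`q` is the conjugate of `p`). -/
def gpNorm {E G : Type*} [NormedAddCommGroup E] [NormedSpace ℝ E]
    [NormedAddCommGroup G] [NormedSpace ℝ G] (p q : ℝ) (z : TensorProduct ℝ E G) : ℝ :=
  sInf {r : ℝ | ∃ (m : ℕ) (n : Fin m → E) (h : Fin m → G),
    z = ∑ j, n j ⊗ₜ[ℝ] h j ∧ r = strongLp p n * weakLp q h}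

/-- The tensor norm `w_p` (`q` is the conjugate of `p`). -/
def wpNorm {E G : Type*} [NormedAddCommGroup E] [NormedSpace ℝ E]
    [NormedAddCommGroup G] [NormedSpace ℝ G] (p q : ℝ) (z : TensorProduct ℝ E G) : ℝ :=
  sInf {r : ℝ | ∃ (m : ℕ) (n : Fin m → E) (h : Fin m → G),
    z = ∑ j, n j ⊗ₜ[ℝ] h j ∧ r = weakLp p n * weakLp q h}

/-- `E`, together with the map `δ : Y → E`, is (isometrically) the Lipschitz-free space
of the pointed metric space `(Y, y₀)`: `δ` sends the base point to `0`, is an isometric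
embedding, has dense linear span, and the norm of finite combinations of point evaluations
is computed against the unit ball of `Lip₀(Y)`. -/
structure IsFreeSpace (Y : Type*) [MetricSpace Y] (y₀ : Y)
    (E : Type*) [NormedAddCommGroup E] [NormedSpace ℝ E] [CompleteSpace E]
    (δ : Y → E) : Prop where
  map_base : δ y₀ = 0
  isometry : ∀ x y : Y, ‖δ x - δ y‖ = dist x y
  dense_span : (Submodule.span ℝ (Set.range δ)).topologicalClosure = ⊤
  norm_eq : ∀ (n : ℕ) (a : Fin n → ℝ) (x : Fin n → Y),
    ‖∑ i, a i • δ (x i)‖ =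
      sSup {r : ℝ | ∃ s : Y → ℝ, LipschitzWith 1 s ∧ s y₀ = 0 ∧ r = |∑ i, a i * s (x i)|}

end

noncomputable section

variable {Y W FY FW : Type*} [MetricSpace Y] [MetricSpace W]
  [NormedAddCommGroup FY] [NormedSpace ℝ FY] [NormedAddCommGroup FW] [NormedSpace ℝ FW]

/-- `T : Y → W` is MS-Lipschitz `p`-summing (`q` is the conjugate of `p`), the free spaces
of `Y` and `W` being realized as `FY`, `FW` via `δY`, `δW`.  Elements of `W^# = F(W)^*` are
encoded as elements of `Dual ℝ FW`, and `d_p^L` is the Chevet–Saphar norm computed in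
`F(Y) ⊗ W^#`. -/
def MSLipPSumming (p q : ℝ) (δY : Y → FY) (δW : W → FW) (T : Y → W) : Prop :=
  ∃ K > 0, ∀ (k : ℕ) (x y : Fin k → Y) (f : Fin k → StrongDual ℝ FW),
    |∑ l, (f l (δW (T (x l))) - f l (δW (T (y l))))| ≤
      K * dpNorm p q (∑ l, (δY (x l) - δY (y l)) ⊗ₜ[ℝ] f l)

/-- `T : Y → W` is MS-strongly Lipschitz `p`-summing (`q` is the conjugate of `p`). -/
def MSStronglyLipPSumming (p q : ℝ) (δY : Y → FY) (δW : W → FW) (T : Y → W) : Prop :=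
  ∃ K > 0, ∀ (k : ℕ) (x y : Fin k → Y) (f : Fin k → StrongDual ℝ FW),
    |∑ l, (f l (δW (T (x l))) - f l (δW (T (y l))))| ≤
      K * gpNorm p q (∑ l, (δY (x l) - δY (y l)) ⊗ₜ[ℝ] f l)

/-- `T : Y → W` is MS-Lipschitz `p`-nuclear (`q` is the conjugate of `p`). -/
def MSLipPNuclear (p q : ℝ) (δY : Y → FY) (δW : W → FW) (T : Y → W) : Prop :=
  ∃ K > 0, ∀ (k : ℕ) (x y : Fin k → Y) (f : Fin k → StrongDual ℝ FW),
    |∑ l, (f l (δW (T (x l))) - f l (δW (T (y l))))| ≤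
      K * wpNorm p q (∑ l, (δY (x l) - δY (y l)) ⊗ₜ[ℝ] f l)

end
noncomputable section AuxProofs

open Finset

private lemma real_le_of_forall_pos_le_add {a b : ℝ} (h : ∀ ε : ℝ, 0 < ε → a ≤ b + ε) :
    a ≤ b := by
  by_contra hab
  push_neg at hab
  have := h ((a - b) / 2) (by linarith)
  linarith

section NormFacts

variable {E : Type*} [NormedAddCommGroup E] [NormedSpace ℝ E]

lemma strongLp_nonneg (p : ℝ) {m : ℕ} (x : Fin m → E) : 0 ≤ strongLp p x :=
  Real.rpow_nonneg (Finset.sum_nonneg fun _ _ => Real.rpow_nonneg (norm_nonneg _) _) _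

lemma cand_le_strongLp {p : ℝ} (hp : 0 < p) {m : ℕ} (x : Fin m → E) (φ : StrongDual ℝ E)
    (hφ : ‖φ‖ ≤ 1) : (∑ j, |φ (x j)| ^ p) ^ (1 / p) ≤ strongLp p x := by
  refine Real.rpow_le_rpow (Finset.sum_nonneg fun _ _ => Real.rpow_nonneg (abs_nonneg _) _)
    (Finset.sum_le_sum fun j _ => Real.rpow_le_rpow (abs_nonneg _) ?_ hp.le) (by positivity)
  calc |φ (x j)| = ‖φ (x j)‖ := (Real.norm_eq_abs _).symm
    _ ≤ ‖φ‖ * ‖x j‖ := φ.le_opNorm _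
    _ ≤ 1 * ‖x j‖ := mul_le_mul_of_nonneg_right hφ (norm_nonneg _)
    _ = ‖x j‖ := one_mul _

lemma weakLp_bddAbove {p : ℝ} (hp : 0 < p) {m : ℕ} (x : Fin m → E) :
    BddAbove {r : ℝ | ∃ φ : StrongDual ℝ E, ‖φ‖ ≤ 1 ∧ r = (∑ j, |φ (x j)| ^ p) ^ (1 / p)} := by
  refine ⟨strongLp p x, ?_⟩
  rintro r ⟨φ, hφ, rfl⟩
  exact cand_le_strongLp hp x φ hφ

lemma le_weakLp {p : ℝ} (hp : 0 < p) {m : ℕ} (x : Fin m → E) (φ : StrongDual ℝ E) (hφ : ‖φ‖ ≤ 1) :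
    (∑ j, |φ (x j)| ^ p) ^ (1 / p) ≤ weakLp p x :=
  le_csSup (weakLp_bddAbove hp x) ⟨φ, hφ, rfl⟩

lemma weakLp_nonneg {p : ℝ} (hp : 0 < p) {m : ℕ} (x : Fin m → E) : 0 ≤ weakLp p x := by
  have h := le_weakLp hp x 0 (by simp)
  have h0 : ((∑ j, |(0 : StrongDual ℝ E) (x j)| ^ p) ^ (1 / p) : ℝ) = 0 := by
    simp [Real.zero_rpow hp.ne', Real.zero_rpow (by positivity : (1 : ℝ) / p ≠ 0),
      Real.zero_rpow (by positivity : p⁻¹ ≠ 0)]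
  rw [h0] at h
  exact h

lemma weakLp_le {p : ℝ} {m : ℕ} (x : Fin m → E) {C : ℝ} (hC : 0 ≤ C)
    (h : ∀ φ : StrongDual ℝ E, ‖φ‖ ≤ 1 → (∑ j, |φ (x j)| ^ p) ^ (1 / p) ≤ C) :
    weakLp p x ≤ C :=
  Real.sSup_le (by rintro r ⟨φ, hφ, rfl⟩; exact h φ hφ) hC

lemma weakLp_le_strongLp {p : ℝ} (hp : 0 < p) {m : ℕ} (x : Fin m → E) :
    weakLp p x ≤ strongLp p x :=
  weakLp_le x (strongLp_nonneg p x) fun φ hφ => cand_le_strongLp hp x φ hφ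

lemma Lp_tri {p : ℝ} (hp : 1 ≤ p) {m : ℕ} (a b c : Fin m → ℝ)
    (ha : ∀ j, 0 ≤ a j) (hb : ∀ j, 0 ≤ b j) (hc : ∀ j, 0 ≤ c j)
    (h : ∀ j, a j ≤ b j + c j) :
    (∑ j, a j ^ p) ^ (1 / p) ≤ (∑ j, b j ^ p) ^ (1 / p) + (∑ j, c j ^ p) ^ (1 / p) := by
  have h1 : (∑ j, a j ^ p) ^ (1 / p) ≤ (∑ j, (b j + c j) ^ p) ^ (1 / p) :=
    Real.rpow_le_rpow (Finset.sum_nonneg fun j _ => Real.rpow_nonneg (ha j) _)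
      (Finset.sum_le_sum fun j _ => Real.rpow_le_rpow (ha j) (h j) (by linarith))
      (by positivity)
  exact h1.trans (Real.Lp_add_le_of_nonneg Finset.univ hp (fun j _ => hb j) (fun j _ => hc j))

lemma strongLp_add_le {p : ℝ} (hp : 1 ≤ p) {m : ℕ} (x y : Fin m → E) :
    strongLp p (fun j => x j + y j) ≤ strongLp p x + strongLp p y := by
  have := Lp_tri hp (fun j => ‖x j + y j‖) (fun j => ‖x j‖) (fun j => ‖y j‖)
    (fun j => norm_nonneg _) (fun j => norm_nonneg _) (fun j => norm_nonneg _)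
    (fun j => norm_add_le _ _)
  exact this

lemma strongLp_le_add_sub {p : ℝ} (hp : 1 ≤ p) {m : ℕ} (x y : Fin m → E) :
    strongLp p x ≤ strongLp p y + strongLp p (fun j => x j - y j) := by
  have h := strongLp_add_le hp y (fun j => x j - y j)
  have e : (fun j => y j + (x j - y j)) = x := by funext j; abel
  rwa [e] at h

lemma strongLp_le_card_mul {p : ℝ} (hp : 0 < p) {m : ℕ} (x : Fin m → E) {ε : ℝ} (hε : 0 ≤ ε)
    (h : ∀ j, ‖x j‖ ≤ ε) : strongLp p x ≤ (m : ℝ) ^ (1 / p) * ε := by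
  have h1 : ∑ j, ‖x j‖ ^ p ≤ (m : ℝ) * ε ^ p := by
    calc ∑ j, ‖x j‖ ^ p ≤ ∑ _j : Fin m, ε ^ p :=
          Finset.sum_le_sum fun j _ => Real.rpow_le_rpow (norm_nonneg _) (h j) hp.le
      _ = (m : ℝ) * ε ^ p := by
          rw [Finset.sum_const, Finset.card_univ, Fintype.card_fin, nsmul_eq_mul]
  calc strongLp p x ≤ ((m : ℝ) * ε ^ p) ^ (1 / p) :=
        Real.rpow_le_rpow (Finset.sum_nonneg fun _ _ => Real.rpow_nonneg (norm_nonneg _) _)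
          h1 (by positivity)
    _ = (m : ℝ) ^ (1 / p) * ε := by
        rw [Real.mul_rpow (by positivity) (by positivity), ← Real.rpow_mul hε,
          mul_one_div_cancel hp.ne', Real.rpow_one]

lemma weakLp_le_add_sub {p : ℝ} (hp1 : 1 ≤ p) {m : ℕ} (x y : Fin m → E) :
    weakLp p x ≤ weakLp p y + strongLp p (fun j => x j - y j) := by
  have hp : 0 < p := lt_of_lt_of_le one_pos hp1
  refine weakLp_le x (add_nonneg (weakLp_nonneg hp y) (strongLp_nonneg _ _)) fun φ hφ => ?_
  have h1 : (∑ j, |φ (x j)| ^ p) ^ (1 / p) ≤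
      (∑ j, |φ (y j)| ^ p) ^ (1 / p) + (∑ j, |φ (x j - y j)| ^ p) ^ (1 / p) := by
    refine Lp_tri hp1 _ _ _ (fun j => abs_nonneg _) (fun j => abs_nonneg _)
      (fun j => abs_nonneg _) fun j => ?_
    have e : φ (x j) = φ (y j) + φ (x j - y j) := by rw [map_sub]; ring
    rw [e]; exact abs_add_le _ _
  refine h1.trans (add_le_add (le_weakLp hp y φ hφ) ?_)
  exact cand_le_strongLp hp (fun j => x j - y j) φ hφ

lemma weakLp_smul_sign {q : ℝ} {m : ℕ} (h : Fin m → E) (ε : Fin m → ℝ)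
    (hε : ∀ j, |ε j| = 1) :
    weakLp q (fun j => ε j • h j) = weakLp q h := by
  unfold weakLp
  congr 1
  ext r
  refine exists_congr fun φ => and_congr_right fun _ => ?_
  have key : (∑ j, |φ (ε j • h j)| ^ q) = ∑ j, |φ (h j)| ^ q := by
    refine Finset.sum_congr rfl fun j _ => ?_
    rw [map_smul, smul_eq_mul, abs_mul, hε j, one_mul]
  constructor <;> intro hr <;> rw [hr]
  · rw [key]
  · rw [key]

end NormFacts

section TensorNormFacts

variable {E G : Type*} [NormedAddCommGroup E] [NormedSpace ℝ E]
  [NormedAddCommGroup G] [NormedSpace ℝ G]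

lemma dpNorm_le_rep {p q : ℝ} (hp : 0 < p) {m : ℕ} (n : Fin m → E) (h : Fin m → G) :
    dpNorm p q (∑ j, n j ⊗ₜ[ℝ] h j) ≤ weakLp p n * strongLp q h := by
  refine csInf_le ⟨0, ?_⟩ ⟨m, n, h, rfl, rfl⟩
  rintro r ⟨k, n', h', -, rfl⟩
  exact mul_nonneg (weakLp_nonneg hp _) (strongLp_nonneg _ _)

lemma gpNorm_le_rep {p q : ℝ} (hq : 0 < q) {m : ℕ} (n : Fin m → E) (h : Fin m → G) :
    gpNorm p q (∑ j, n j ⊗ₜ[ℝ] h j) ≤ strongLp p n * weakLp q h := by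
  refine csInf_le ⟨0, ?_⟩ ⟨m, n, h, rfl, rfl⟩
  rintro r ⟨k, n', h', -, rfl⟩
  exact mul_nonneg (strongLp_nonneg _ _) (weakLp_nonneg hq _)

end TensorNormFacts

end AuxProofs

noncomputable section LiftSection

open Finset

lemma bddAbove_lipSet {Y : Type*} [MetricSpace Y] [Inhabited Y]
    (n : ℕ) (a : Fin n → ℝ) (x : Fin n → Y) :
    BddAbove {r : ℝ | ∃ s : Y → ℝ, LipschitzWith 1 s ∧ s default = 0 ∧
      r = |∑ i, a i * s (x i)|} := by
  refine ⟨∑ i, |a i| * dist (x i) default, ?_⟩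
  rintro r ⟨s, hs, hs0, rfl⟩
  calc |∑ i, a i * s (x i)| ≤ ∑ i, |a i * s (x i)| := Finset.abs_sum_le_sum_abs _ _
    _ ≤ ∑ i, |a i| * dist (x i) default := by
        refine Finset.sum_le_sum fun i _ => ?_
        rw [abs_mul]
        refine mul_le_mul_of_nonneg_left ?_ (abs_nonneg _)
        have h := hs.dist_le_mul (x i) default
        simpa [Real.dist_eq, hs0] using h

section Lift

variable {Y W FY FW : Type*} [MetricSpace Y] [Inhabited Y] [MetricSpace W] [Inhabited W]
  [NormedAddCommGroup FY] [NormedSpace ℝ FY] [CompleteSpace FY]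
  [NormedAddCommGroup FW] [NormedSpace ℝ FW] [CompleteSpace FW]
  {δY : Y → FY} {δW : W → FW}

lemma key_estimate (hFY : IsFreeSpace Y default FY δY) (hFW : IsFreeSpace W default FW δW)
    {u : Y → W} {L : NNReal} (hL : LipschitzWith L u) (hu0 : u default = default)
    (n : ℕ) (a : Fin n → ℝ) (x : Fin n → Y) :
    ‖∑ i, a i • δW (u (x i))‖ ≤ ((L : ℝ) + 1) * ‖∑ i, a i • δY (x i)‖ := by
  set C : ℝ := (L : ℝ) + 1 with hC
  have hCpos : 0 < C := by positivity
  rw [hFW.norm_eq n a (fun i => u (x i))]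
  refine Real.sSup_le ?_ (by positivity)
  rintro r ⟨s, hs, hs0, rfl⟩
  set t : Y → ℝ := fun z => C⁻¹ * s (u z) with ht
  have hts : LipschitzWith 1 t := by
    refine LipschitzWith.of_dist_le_mul fun z z' => ?_
    have h1 : dist (t z) (t z') = C⁻¹ * dist (s (u z)) (s (u z')) := by
      rw [Real.dist_eq, Real.dist_eq, ht]
      dsimp only
      rw [← mul_sub, abs_mul, abs_of_nonneg (by positivity : (0:ℝ) ≤ C⁻¹)]
    rw [h1, NNReal.coe_one, one_mul]
    have h2 : dist (s (u z)) (s (u z')) ≤ dist (u z) (u z') := by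
      simpa using hs.dist_le_mul (u z) (u z')
    have h3 : dist (u z) (u z') ≤ C * dist z z' := by
      have h4 := hL.dist_le_mul z z'
      have h5 : dist (u z) (u z') ≤ (L : ℝ) * dist z z' := h4
      nlinarith [dist_nonneg (x := z) (y := z')]
    calc C⁻¹ * dist (s (u z)) (s (u z')) ≤ C⁻¹ * (C * dist z z') := by
          exact mul_le_mul_of_nonneg_left (h2.trans h3) (by positivity)
      _ = dist z z' := by field_simp
  have ht0 : t default = 0 := by rw [ht]; dsimp only; rw [hu0, hs0, mul_zero]
  have hmem : |∑ i, a i * t (x i)| ≤ ‖∑ i, a i • δY (x i)‖ := by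
    rw [hFY.norm_eq n a x]
    exact le_csSup (bddAbove_lipSet n a x) ⟨t, hts, ht0, rfl⟩
  have hsum : ∑ i, a i * s (u (x i)) = C * ∑ i, a i * t (x i) := by
    rw [Finset.mul_sum]
    refine Finset.sum_congr rfl fun i _ => ?_
    rw [ht]; dsimp only; field_simp
  rw [hsum, abs_mul, abs_of_pos hCpos]
  exact mul_le_mul_of_nonneg_left hmem hCpos.le

lemma exists_lift (hFY : IsFreeSpace Y default FY δY) (hFW : IsFreeSpace W default FW δW)
    (u : Y → W) (hulip : ∃ K, LipschitzWith K u) (hu0 : u default = default) :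
    ∃ T : FY →L[ℝ] FW, ∀ x : Y, T (δY x) = δW (u x) := by
  classical
  obtain ⟨L, hL⟩ := hulip
  set C : ℝ := (L : ℝ) + 1 with hCdef
  set A : (Y →₀ ℝ) →ₗ[ℝ] FY := Finsupp.linearCombination ℝ δY with hAdef
  set B : (Y →₀ ℝ) →ₗ[ℝ] FW := Finsupp.linearCombination ℝ (fun y => δW (u y)) with hBdef
  have hAB : ∀ c : Y →₀ ℝ, ‖B c‖ ≤ C * ‖A c‖ := by
    intro c
    set nn := c.support.card with hnn
    set e : Fin nn ≃ {y // y ∈ c.support} := c.support.equivFin.symm with he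
    have hA : A c = ∑ i : Fin nn, c (e i) • δY (e i) := by
      rw [hAdef]
      rw [Finsupp.linearCombination_apply, Finsupp.sum, ← Finset.sum_coe_sort c.support
        (fun y => c y • δY y), ← Equiv.sum_comp e (fun y : {y // y ∈ c.support} => c y • δY y)]
    have hB : B c = ∑ i : Fin nn, c (e i) • δW (u (e i)) := by
      rw [hBdef]
      rw [Finsupp.linearCombination_apply, Finsupp.sum, ← Finset.sum_coe_sort c.support
        (fun y => c y • δW (u y)),
        ← Equiv.sum_comp e (fun y : {y // y ∈ c.support} => c y • δW (u y))]
    rw [hA, hB]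
    exact key_estimate hFY hFW hL hu0 nn _ _
  have hker : LinearMap.ker A ≤ LinearMap.ker B := by
    intro c hc
    rw [LinearMap.mem_ker] at hc ⊢
    have h := hAB c
    rw [hc, norm_zero, mul_zero] at h
    exact norm_le_zero_iff.mp h
  set Bq : ((Y →₀ ℝ) ⧸ LinearMap.ker A) →ₗ[ℝ] FW := Submodule.liftQ _ B hker with hBq
  set qA := LinearMap.quotKerEquivRange A with hqA
  set f₀ : LinearMap.range A →ₗ[ℝ] FW := Bq.comp (qA.symm : _ ≃ₗ[ℝ] _).toLinearMap with hf₀def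
  have hf₀ : ∀ (c : Y →₀ ℝ) (hc : A c ∈ LinearMap.range A), f₀ ⟨A c, hc⟩ = B c := by
    intro c hc
    have h1 : qA (Submodule.Quotient.mk c) = ⟨A c, hc⟩ :=
      Subtype.ext (LinearMap.quotKerEquivRange_apply_mk A c)
    have h2 : f₀ ⟨A c, hc⟩ = Bq (qA.symm (qA (Submodule.Quotient.mk c))) := by
      rw [h1]; rfl
    rw [h2, LinearEquiv.symm_apply_apply]
    exact Submodule.liftQ_apply _ B c
  have hf₀bound : ∀ z : LinearMap.range A, ‖f₀ z‖ ≤ C * ‖z‖ := by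
    rintro ⟨-, c, rfl⟩
    rw [hf₀ c ⟨c, rfl⟩]
    exact hAB c
  set f₀L : LinearMap.range A →L[ℝ] FW := f₀.mkContinuous C hf₀bound with hf₀L
  have hdense : DenseRange ((LinearMap.range A).subtypeL : LinearMap.range A →L[ℝ] FY) := by
    have h1 : LinearMap.range A = Submodule.span ℝ (Set.range δY) := by
      rw [hAdef]; exact Finsupp.range_linearCombination ℝ (v := δY)
    have h2 : Dense ((LinearMap.range A : Submodule ℝ FY) : Set FY) := by
      rw [h1]
      exact Submodule.dense_iff_topologicalClosure_eq_top.mpr hFY.dense_span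
    exact h2.denseRange_val
  have hui : IsUniformInducing ((LinearMap.range A).subtypeL : LinearMap.range A →L[ℝ] FY) :=
    isUniformEmbedding_subtype_val.isUniformInducing
  refine ⟨ContinuousLinearMap.extend f₀L (LinearMap.range A).subtypeL, fun x => ?_⟩
  have hx : δY x ∈ LinearMap.range A := by
    refine ⟨Finsupp.single x 1, ?_⟩
    rw [hAdef]
    rw [Finsupp.linearCombination_single, one_smul]
  have h3 := ContinuousLinearMap.extend_eq f₀L hdense hui
    ⟨δY x, hx⟩
  have h4 : ((LinearMap.range A).subtypeL (⟨δY x, hx⟩ : LinearMap.range A) : FY) = δY x := rfl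
  rw [h4] at h3
  rw [h3]
  have h5 : (⟨δY x, hx⟩ : LinearMap.range A) =
      ⟨A (Finsupp.single x 1), LinearMap.mem_range_self A _⟩ := by
    refine Subtype.ext ?_
    show δY x = A (Finsupp.single x 1)
    rw [hAdef, Finsupp.linearCombination_single, one_smul]
  have h6 : f₀L (⟨δY x, hx⟩ : LinearMap.range A) = B (Finsupp.single x 1) := by
    rw [hf₀L]
    show f₀ _ = _
    rw [h5]
    exact hf₀ _ _
  rw [h6, hBdef, Finsupp.linearCombination_single, one_smul]

end Lift

end LiftSection

noncomputable section MainMachinery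

open Finset

section Pairing

variable {Y W FY FW : Type*} [MetricSpace Y] [Inhabited Y] [MetricSpace W] [Inhabited W]
  [NormedAddCommGroup FY] [NormedSpace ℝ FY] [CompleteSpace FY]
  [NormedAddCommGroup FW] [NormedSpace ℝ FW] [CompleteSpace FW]
  {δY : Y → FY} {δW : W → FW}

lemma pairing_span_bound_dp
    (hFY : IsFreeSpace Y default FY δY) (hFW : IsFreeSpace W default FW δW)
    {p q : ℝ} (hp : 0 < p)
    {u : Y → W} (hu0 : u default = default)
    {T : FY →L[ℝ] FW} (hT : ∀ x, T (δY x) = δW (u x))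
    {K : ℝ} (hK : 0 < K)
    (hu : ∀ (k : ℕ) (x y : Fin k → Y) (f : Fin k → StrongDual ℝ FW),
      |∑ l, (f l (δW (u (x l))) - f l (δW (u (y l))))| ≤
        K * dpNorm p q (∑ l, (δY (x l) - δY (y l)) ⊗ₜ[ℝ] f l))
    (k : ℕ) (n : Fin k → FY) (f : Fin k → StrongDual ℝ FW)
    (hn : ∀ l, n l ∈ Submodule.span ℝ (Set.range δY)) :
    |∑ l, f l (T (n l))| ≤ K * (weakLp p n * strongLp q f) := by
  classical
  have h1 : ∀ l, ∃ (mm : ℕ) (a : Fin mm → ℝ) (xs : Fin mm → Y),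
      n l = ∑ i, a i • δY (xs i) := by
    intro l
    obtain ⟨mm, a, g, hg⟩ := Submodule.mem_span_set'.mp (hn l)
    choose xs hxs using fun i => (g i).2
    exact ⟨mm, a, xs, by
      rw [← hg]
      exact (Finset.sum_congr rfl fun i _ => by rw [hxs i]).symm⟩
  choose mm a xs hxs using h1
  set e := Fintype.equivFin ((l : Fin k) × Fin (mm l)) with he
  set M := Fintype.card ((l : Fin k) × Fin (mm l)) with hM
  set X : Fin M → Y := fun j => xs (e.symm j).1 (e.symm j).2 with hX
  set F : Fin M → StrongDual ℝ FW := fun j => a (e.symm j).1 (e.symm j).2 • f (e.symm j).1 with hF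
  have hu' := hu M X (fun _ => default) F
  have hδW0 : δW (u default) = 0 := by rw [hu0]; exact hFW.map_base
  have hδY0 : δY (default : Y) = 0 := hFY.map_base
  have hL : ∑ j, (F j (δW (u (X j))) - F j (δW (u default))) = ∑ l, f l (T (n l)) := by
    have h2 : ∀ j, F j (δW (u (X j))) - F j (δW (u default)) = F j (δW (u (X j))) := by
      intro j; rw [hδW0, map_zero, sub_zero]
    rw [Finset.sum_congr rfl fun j _ => h2 j]
    have h3 : ∑ j, F j (δW (u (X j))) =
        ∑ σ : (l : Fin k) × Fin (mm l), (a σ.1 σ.2 • f σ.1) (δW (u (xs σ.1 σ.2))) :=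
      Equiv.sum_comp e.symm
        (fun σ : (l : Fin k) × Fin (mm l) => (a σ.1 σ.2 • f σ.1) (δW (u (xs σ.1 σ.2))))
    rw [h3, ← Finset.univ_sigma_univ, Finset.sum_sigma]
    refine Finset.sum_congr rfl fun l _ => ?_
    rw [hxs l, map_sum, map_sum]
    refine Finset.sum_congr rfl fun i _ => ?_
    simp only [ContinuousLinearMap.smul_apply, map_smul, hT, smul_eq_mul]
  have hTz : ∑ j, (δY (X j) - δY default) ⊗ₜ[ℝ] F j = ∑ l, n l ⊗ₜ[ℝ] f l := by
    have h4 : ∀ j, (δY (X j) - δY default) ⊗ₜ[ℝ] F j =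
        (a (e.symm j).1 (e.symm j).2 • δY (X j)) ⊗ₜ[ℝ] f (e.symm j).1 := by
      intro j
      rw [hδY0, sub_zero, hF]
      exact (TensorProduct.smul_tmul _ _ _).symm
    rw [Finset.sum_congr rfl fun j _ => h4 j]
    have h5 : ∑ j, (a (e.symm j).1 (e.symm j).2 • δY (X j)) ⊗ₜ[ℝ] f (e.symm j).1 =
        ∑ σ : (l : Fin k) × Fin (mm l), (a σ.1 σ.2 • δY (xs σ.1 σ.2)) ⊗ₜ[ℝ] f σ.1 :=
      Equiv.sum_comp e.symm
        (fun σ : (l : Fin k) × Fin (mm l) => (a σ.1 σ.2 • δY (xs σ.1 σ.2)) ⊗ₜ[ℝ] f σ.1)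
    rw [h5, ← Finset.univ_sigma_univ, Finset.sum_sigma]
    refine Finset.sum_congr rfl fun l _ => ?_
    rw [hxs l, TensorProduct.sum_tmul]
  rw [hL, hTz] at hu'
  exact hu'.trans (mul_le_mul_of_nonneg_left (dpNorm_le_rep hp n f) hK.le)

lemma pairing_span_bound_gp
    (hFY : IsFreeSpace Y default FY δY) (hFW : IsFreeSpace W default FW δW)
    {p q : ℝ} (hq : 0 < q)
    {u : Y → W} (hu0 : u default = default)
    {T : FY →L[ℝ] FW} (hT : ∀ x, T (δY x) = δW (u x))
    {K : ℝ} (hK : 0 < K)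
    (hu : ∀ (k : ℕ) (x y : Fin k → Y) (f : Fin k → StrongDual ℝ FW),
      |∑ l, (f l (δW (u (x l))) - f l (δW (u (y l))))| ≤
        K * gpNorm p q (∑ l, (δY (x l) - δY (y l)) ⊗ₜ[ℝ] f l))
    (k : ℕ) (n : Fin k → FY) (f : Fin k → StrongDual ℝ FW)
    (hn : ∀ l, n l ∈ Submodule.span ℝ (Set.range δY)) :
    |∑ l, f l (T (n l))| ≤ K * (strongLp p n * weakLp q f) := by
  classical
  have h1 : ∀ l, ∃ (mm : ℕ) (a : Fin mm → ℝ) (xs : Fin mm → Y),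
      n l = ∑ i, a i • δY (xs i) := by
    intro l
    obtain ⟨mm, a, g, hg⟩ := Submodule.mem_span_set'.mp (hn l)
    choose xs hxs using fun i => (g i).2
    exact ⟨mm, a, xs, by
      rw [← hg]
      exact (Finset.sum_congr rfl fun i _ => by rw [hxs i]).symm⟩
  choose mm a xs hxs using h1
  set e := Fintype.equivFin ((l : Fin k) × Fin (mm l)) with he
  set M := Fintype.card ((l : Fin k) × Fin (mm l)) with hM
  set X : Fin M → Y := fun j => xs (e.symm j).1 (e.symm j).2 with hX
  set F : Fin M → StrongDual ℝ FW := fun j => a (e.symm j).1 (e.symm j).2 • f (e.symm j).1 with hF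
  have hu' := hu M X (fun _ => default) F
  have hδW0 : δW (u default) = 0 := by rw [hu0]; exact hFW.map_base
  have hδY0 : δY (default : Y) = 0 := hFY.map_base
  have hL : ∑ j, (F j (δW (u (X j))) - F j (δW (u default))) = ∑ l, f l (T (n l)) := by
    have h2 : ∀ j, F j (δW (u (X j))) - F j (δW (u default)) = F j (δW (u (X j))) := by
      intro j; rw [hδW0, map_zero, sub_zero]
    rw [Finset.sum_congr rfl fun j _ => h2 j]
    have h3 : ∑ j, F j (δW (u (X j))) =
        ∑ σ : (l : Fin k) × Fin (mm l), (a σ.1 σ.2 • f σ.1) (δW (u (xs σ.1 σ.2))) :=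
      Equiv.sum_comp e.symm
        (fun σ : (l : Fin k) × Fin (mm l) => (a σ.1 σ.2 • f σ.1) (δW (u (xs σ.1 σ.2))))
    rw [h3, ← Finset.univ_sigma_univ, Finset.sum_sigma]
    refine Finset.sum_congr rfl fun l _ => ?_
    rw [hxs l, map_sum, map_sum]
    refine Finset.sum_congr rfl fun i _ => ?_
    simp only [ContinuousLinearMap.smul_apply, map_smul, hT, smul_eq_mul]
  have hTz : ∑ j, (δY (X j) - δY default) ⊗ₜ[ℝ] F j = ∑ l, n l ⊗ₜ[ℝ] f l := by
    have h4 : ∀ j, (δY (X j) - δY default) ⊗ₜ[ℝ] F j =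
        (a (e.symm j).1 (e.symm j).2 • δY (X j)) ⊗ₜ[ℝ] f (e.symm j).1 := by
      intro j
      rw [hδY0, sub_zero, hF]
      exact (TensorProduct.smul_tmul _ _ _).symm
    rw [Finset.sum_congr rfl fun j _ => h4 j]
    have h5 : ∑ j, (a (e.symm j).1 (e.symm j).2 • δY (X j)) ⊗ₜ[ℝ] f (e.symm j).1 =
        ∑ σ : (l : Fin k) × Fin (mm l), (a σ.1 σ.2 • δY (xs σ.1 σ.2)) ⊗ₜ[ℝ] f σ.1 :=
      Equiv.sum_comp e.symm
        (fun σ : (l : Fin k) × Fin (mm l) => (a σ.1 σ.2 • δY (xs σ.1 σ.2)) ⊗ₜ[ℝ] f σ.1)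
    rw [h5, ← Finset.univ_sigma_univ, Finset.sum_sigma]
    refine Finset.sum_congr rfl fun l _ => ?_
    rw [hxs l, TensorProduct.sum_tmul]
  rw [hL, hTz] at hu'
  exact hu'.trans (mul_le_mul_of_nonneg_left (gpNorm_le_rep hq n f) hK.le)

end Pairing

section Extensions

variable {F G : Type*} [NormedAddCommGroup F] [NormedSpace ℝ F]
  [NormedAddCommGroup G] [NormedSpace ℝ G]

lemma strongLp_le_of_pairing {p q : ℝ} (hpq : Real.HolderConjugate p q) {m : ℕ}
    (w : Fin m → F) {C : ℝ} (hC : 0 ≤ C)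
    (h : ∀ f : Fin m → StrongDual ℝ F, |∑ l, f l (w l)| ≤ C * strongLp q f) :
    strongLp p w ≤ C := by
  have hp := hpq.pos
  have hq := hpq.symm.pos
  have hgex : ∀ l, ∃ g : StrongDual ℝ F, ‖g‖ ≤ 1 ∧ g (w l) = ‖w l‖ := by
    intro l
    by_cases hw : w l = 0
    · exact ⟨0, by simp, by simp [hw]⟩
    · obtain ⟨g, hg1, hg2⟩ := exists_dual_vector ℝ (w l) (norm_ne_zero_iff.mpr hw)
      exact ⟨g, le_of_eq hg1, by exact_mod_cast hg2⟩
  choose g hg1 hg2 using hgex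
  set S := ∑ l, ‖w l‖ ^ p with hS
  have hS0 : 0 ≤ S := Finset.sum_nonneg fun l _ => Real.rpow_nonneg (norm_nonneg _) _
  set f : Fin m → StrongDual ℝ F := fun l => ‖w l‖ ^ (p - 1) • g l with hfdef
  have hsum : ∑ l, f l (w l) = S := by
    refine Finset.sum_congr rfl fun l _ => ?_
    rw [hfdef]
    dsimp only
    rw [ContinuousLinearMap.smul_apply, hg2 l, smul_eq_mul]
    rcases eq_or_ne ‖w l‖ 0 with hw | hw
    · rw [hw, mul_zero, Real.zero_rpow hp.ne']
    · have hwpos : 0 < ‖w l‖ := lt_of_le_of_ne (norm_nonneg _) (Ne.symm hw)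
      nth_rewrite 2 [← Real.rpow_one ‖w l‖]
      rw [← Real.rpow_add hwpos, sub_add_cancel]
  have hfnorm : ∀ l, ‖f l‖ ^ q ≤ ‖w l‖ ^ p := by
    intro l
    have h1 : ‖f l‖ ≤ ‖w l‖ ^ (p - 1) := by
      rw [hfdef]
      dsimp only
      rw [norm_smul, Real.norm_eq_abs,
        abs_of_nonneg (Real.rpow_nonneg (norm_nonneg _) _)]
      exact mul_le_of_le_one_right (Real.rpow_nonneg (norm_nonneg _) _) (hg1 l)
    calc ‖f l‖ ^ q ≤ (‖w l‖ ^ (p - 1)) ^ q :=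
          Real.rpow_le_rpow (norm_nonneg _) h1 hq.le
      _ = ‖w l‖ ^ ((p - 1) * q) := (Real.rpow_mul (norm_nonneg _) _ _).symm
      _ = ‖w l‖ ^ p := by rw [hpq.sub_one_mul_conj]
  have hstrong : strongLp q f ≤ S ^ (1 / q) :=
    Real.rpow_le_rpow (Finset.sum_nonneg fun _ _ => Real.rpow_nonneg (norm_nonneg _) _)
      (Finset.sum_le_sum fun l _ => hfnorm l) (by positivity)
  have hS_le : S ≤ C * S ^ (1 / q) := by
    have h2 := h f
    rw [hsum, abs_of_nonneg hS0] at h2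
    exact h2.trans (mul_le_mul_of_nonneg_left hstrong hC)
  rcases hS0.eq_or_lt with hS0' | hSpos
  · have hzero : strongLp p w = 0 := by
      show (∑ j, ‖w j‖ ^ p) ^ (1 / p) = 0
      rw [← hS, ← hS0', Real.zero_rpow (by positivity : (1 : ℝ) / p ≠ 0)]
    rw [hzero]; exact hC
  · have hmul : S ^ (1 / p) * S ^ (1 / q) = S := by
      rw [← Real.rpow_add hSpos, one_div, one_div, hpq.inv_add_inv_eq_one, Real.rpow_one]
    have h2 : S ^ (1 / p) * S ^ (1 / q) ≤ C * S ^ (1 / q) := by rw [hmul]; exact hS_le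
    have h3 := le_of_mul_le_mul_right h2 (Real.rpow_pos_of_pos hSpos (1 / q))
    calc strongLp p w = S ^ (1 / p) := rfl
      _ ≤ C := h3

lemma dense_approx {S : Submodule ℝ F} (hdense : S.topologicalClosure = ⊤) (v : F)
    {ε : ℝ} (hε : 0 < ε) : ∃ w ∈ S, ‖v - w‖ ≤ ε := by
  have hv : v ∈ S.topologicalClosure := by rw [hdense]; trivial
  have hv' : v ∈ closure (S : Set F) := hv
  obtain ⟨w, hw, hd⟩ := Metric.mem_closure_iff.mp hv' ε hε
  exact ⟨w, hw, by rw [← dist_eq_norm]; exact hd.le⟩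

lemma summing_extend {p : ℝ} (hp1 : 1 ≤ p) {S : Submodule ℝ F}
    (hdense : S.topologicalClosure = ⊤) (T : F →L[ℝ] G) {K : ℝ} (hK : 0 ≤ K)
    (hspan : ∀ (m : ℕ) (n : Fin m → F), (∀ l, n l ∈ S) →
      strongLp p (fun j => T (n j)) ≤ K * weakLp p n)
    (m : ℕ) (n : Fin m → F) : strongLp p (fun j => T (n j)) ≤ K * weakLp p n := by
  have hp : 0 < p := lt_of_lt_of_le one_pos hp1
  refine real_le_of_forall_pos_le_add fun ε hε => ?_
  set c : ℝ := (m : ℝ) ^ (1 / p) with hc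
  have hc0 : 0 ≤ c := by positivity
  set D : ℝ := K * c + ‖T‖ * c + 1 with hD
  have hD1 : 0 < D := by positivity
  set ε' : ℝ := ε / D with hε'
  have hε'0 : 0 < ε' := div_pos hε hD1
  have happ : ∀ j, ∃ w ∈ S, ‖n j - w‖ ≤ ε' := fun j => dense_approx hdense (n j) hε'0
  choose n' hn'S hn' using happ
  have key := hspan m n' hn'S
  have t1 : strongLp p (fun j => T (n j)) ≤ strongLp p (fun j => T (n' j)) + c * (‖T‖ * ε') := by
    have tri := strongLp_le_add_sub hp1 (fun j => T (n j)) (fun j => T (n' j))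
    refine tri.trans (add_le_add_right ?_ _)
    refine strongLp_le_card_mul hp _ (by positivity) fun j => ?_
    rw [← map_sub]
    exact (T.le_opNorm _).trans (mul_le_mul_of_nonneg_left (hn' j) (norm_nonneg T))
  have t2 : weakLp p n' ≤ weakLp p n + c * ε' := by
    have tri := weakLp_le_add_sub hp1 n' n
    refine tri.trans (add_le_add_right ?_ _)
    refine strongLp_le_card_mul hp _ hε'0.le fun j => ?_
    rw [norm_sub_rev]
    exact hn' j
  have t3 : K * weakLp p n' ≤ K * weakLp p n + K * (c * ε') := by
    have := mul_le_mul_of_nonneg_left t2 hK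
    nlinarith [this]
  have hDε : D * ε' = ε := by rw [hε']; field_simp
  have hB : c * (‖T‖ * ε') + K * (c * ε') ≤ ε := by
    have h1 : c * (‖T‖ * ε') + K * (c * ε') = (K * c + ‖T‖ * c) * ε' := by ring
    have h2 : (K * c + ‖T‖ * c) * ε' ≤ D * ε' :=
      mul_le_mul_of_nonneg_right (by rw [hD]; linarith) hε'0.le
    rw [h1]
    exact h2.trans_eq hDε
  linarith [key, t1, t3, hB]

lemma strongly_extend {p q : ℝ} (hp1 : 1 ≤ p) (hq : 0 < q) {S : Submodule ℝ F}
    (hdense : S.topologicalClosure = ⊤) (T : F →L[ℝ] G) {K : ℝ} (hK : 0 ≤ K)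
    (hspan : ∀ (m : ℕ) (w : Fin m → F) (h : Fin m → StrongDual ℝ G), (∀ l, w l ∈ S) →
      ∑ l, |h l (T (w l))| ≤ K * (strongLp p w * weakLp q h))
    (m : ℕ) (w : Fin m → F) (h : Fin m → StrongDual ℝ G) :
    ∑ l, |h l (T (w l))| ≤ K * (strongLp p w * weakLp q h) := by
  have hp : 0 < p := lt_of_lt_of_le one_pos hp1
  have hwk : 0 ≤ weakLp q h := weakLp_nonneg hq h
  have hsh : (0:ℝ) ≤ ∑ l, ‖h l‖ := Finset.sum_nonneg fun l _ => norm_nonneg _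
  refine real_le_of_forall_pos_le_add fun ε hε => ?_
  set c : ℝ := (m : ℝ) ^ (1 / p) with hc
  have hc0 : 0 ≤ c := by positivity
  set D : ℝ := K * c * weakLp q h + ‖T‖ * (∑ l, ‖h l‖) + 1 with hD
  have hD1 : 0 < D := by
    have h1 : 0 ≤ K * c * weakLp q h := mul_nonneg (mul_nonneg hK hc0) hwk
    have h2 : 0 ≤ ‖T‖ * (∑ l, ‖h l‖) := mul_nonneg (norm_nonneg T) hsh
    linarith
  set ε' : ℝ := ε / D with hε'
  have hε'0 : 0 < ε' := div_pos hε hD1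
  have happ : ∀ j, ∃ w' ∈ S, ‖w j - w'‖ ≤ ε' := fun j => dense_approx hdense (w j) hε'0
  choose w' hw'S hw' using happ
  have key := hspan m w' h hw'S
  have t0 : ∑ l, |h l (T (w l))| ≤ ∑ l, |h l (T (w' l))| + (∑ l, ‖h l‖) * (‖T‖ * ε') := by
    rw [Finset.sum_mul]
    rw [← Finset.sum_add_distrib]
    refine Finset.sum_le_sum fun l _ => ?_
    have e1 : h l (T (w l)) = h l (T (w' l)) + h l (T (w l) - T (w' l)) := by
      rw [map_sub]; ring
    have e2 : |h l (T (w l))| ≤ |h l (T (w' l))| + |h l (T (w l) - T (w' l))| := by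
      rw [e1]; exact abs_add_le _ _
    refine e2.trans (add_le_add_right ?_ _)
    calc |h l (T (w l) - T (w' l))| = ‖h l (T (w l) - T (w' l))‖ := (Real.norm_eq_abs _).symm
      _ ≤ ‖h l‖ * ‖T (w l) - T (w' l)‖ := (h l).le_opNorm _
      _ ≤ ‖h l‖ * (‖T‖ * ε') := by
          refine mul_le_mul_of_nonneg_left ?_ (norm_nonneg _)
          rw [← map_sub]
          exact (T.le_opNorm _).trans (mul_le_mul_of_nonneg_left (hw' l) (norm_nonneg T))
  have t1 : strongLp p w' ≤ strongLp p w + c * ε' := by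
    have tri := strongLp_le_add_sub hp1 w' w
    refine tri.trans (add_le_add_right ?_ _)
    refine strongLp_le_card_mul hp _ hε'0.le fun j => ?_
    rw [norm_sub_rev]
    exact hw' j
  have hDε : D * ε' = ε := by rw [hε']; field_simp
  have hsw : 0 ≤ strongLp p w := strongLp_nonneg p w
  have t2' : K * strongLp p w' * weakLp q h ≤ K * (strongLp p w + c * ε') * weakLp q h :=
    mul_le_mul_of_nonneg_right (mul_le_mul_of_nonneg_left t1 hK) hwk
  have t2 : K * (strongLp p w' * weakLp q h) ≤
      K * (strongLp p w * weakLp q h) + K * c * weakLp q h * ε' := by nlinarith [t2']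
  have hB : (∑ l, ‖h l‖) * (‖T‖ * ε') + K * c * weakLp q h * ε' ≤ ε := by
    have h1 : (∑ l, ‖h l‖) * (‖T‖ * ε') + K * c * weakLp q h * ε' =
        (K * c * weakLp q h + ‖T‖ * (∑ l, ‖h l‖)) * ε' := by ring
    have h2 : (K * c * weakLp q h + ‖T‖ * (∑ l, ‖h l‖)) * ε' ≤ D * ε' :=
      mul_le_mul_of_nonneg_right (by rw [hD]; linarith) hε'0.le
    rw [h1]
    exact h2.trans_eq hDε
  linarith [key, t0, t2, hB]

end Extensions

end MainMachinery

/-- Theorem 3.9: the composition of an MS-Lipschitz `p`-summing operator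
`u : Y → W` with an MS-strongly Lipschitz `p`-summing operator `v : W → Z` is
MS-Lipschitz `p`-nuclear. -/
theorem msLipPNuclear_comp
    {Y W Z FY FW FZ : Type*} [MetricSpace Y] [Inhabited Y] [MetricSpace W] [Inhabited W]
    [MetricSpace Z] [Inhabited Z]
    [NormedAddCommGroup FY] [NormedSpace ℝ FY] [CompleteSpace FY]
    [NormedAddCommGroup FW] [NormedSpace ℝ FW] [CompleteSpace FW]
    [NormedAddCommGroup FZ] [NormedSpace ℝ FZ] [CompleteSpace FZ]
    {δY : Y → FY} {δW : W → FW} {δZ : Z → FZ}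
    (hFY : IsFreeSpace Y default FY δY) (hFW : IsFreeSpace W default FW δW)
    (hFZ : IsFreeSpace Z default FZ δZ)
    {p q : ℝ} (hpq : p.HolderConjugate q)
    (u : Y → W) (hulip : ∃ K, LipschitzWith K u) (hu0 : u default = default)
    (v : W → Z) (hvlip : ∃ K, LipschitzWith K v) (hv0 : v default = default)
    (hu : MSLipPSumming p q δY δW u)
    (hv : MSStronglyLipPSumming p q δW δZ v) :
    MSLipPNuclear p q δY δZ (v ∘ u) := by
  classical
  obtain ⟨Ku, hKu, hu'⟩ := hu
  obtain ⟨Kv, hKv, hv'⟩ := hv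
  have hp := hpq.pos
  have hq := hpq.symm.pos
  have hp1 : 1 ≤ p := hpq.lt.le
  obtain ⟨Tu, hTu⟩ := exists_lift hFY hFW u hulip hu0
  obtain ⟨Tv, hTv⟩ := exists_lift hFW hFZ v hvlip hv0
  -- `Tu` is p-summing
  have hAu := pairing_span_bound_dp hFY hFW hp hu0 hTu hKu hu'
  have hBu : ∀ (k : ℕ) (n : Fin k → FY), (∀ l, n l ∈ Submodule.span ℝ (Set.range δY)) →
      strongLp p (fun j => Tu (n j)) ≤ Ku * weakLp p n := by
    intro k n hn
    have hC : 0 ≤ Ku * weakLp p n := mul_nonneg hKu.le (weakLp_nonneg hp n)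
    refine strongLp_le_of_pairing hpq _ hC fun f => ?_
    calc |∑ l, f l (Tu (n l))| ≤ Ku * (weakLp p n * strongLp q f) := hAu k n f hn
      _ = Ku * weakLp p n * strongLp q f := by ring
  have hCu : ∀ (k : ℕ) (n : Fin k → FY),
      strongLp p (fun j => Tu (n j)) ≤ Ku * weakLp p n :=
    summing_extend hp1 hFY.dense_span Tu hKu.le hBu
  -- `Tv` is strongly p-summing
  have hAv := pairing_span_bound_gp hFW hFZ hq hv0 hTv hKv hv'
  have hBv : ∀ (k : ℕ) (w : Fin k → FW) (h : Fin k → StrongDual ℝ FZ),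
      (∀ l, w l ∈ Submodule.span ℝ (Set.range δW)) →
      ∑ l, |h l (Tv (w l))| ≤ Kv * (strongLp p w * weakLp q h) := by
    intro k w h hw
    set ee : Fin k → ℝ := fun l => if 0 ≤ h l (Tv (w l)) then 1 else -1 with hee
    have hε1 : ∀ l, |ee l| = 1 := by
      intro l
      by_cases hcs : 0 ≤ h l (Tv (w l)) <;> simp [hee, hcs]
    have h1 := hAv k w (fun l => ee l • h l) hw
    have h2 : ∑ l, (ee l • h l) (Tv (w l)) = ∑ l, |h l (Tv (w l))| := by
      refine Finset.sum_congr rfl fun l _ => ?_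
      rw [ContinuousLinearMap.smul_apply, smul_eq_mul]
      by_cases hcs : 0 ≤ h l (Tv (w l))
      · rw [abs_of_nonneg hcs]
        simp [hee, hcs]
      · rw [abs_of_neg (lt_of_not_ge hcs)]
        simp [hee, hcs]
    rw [h2, weakLp_smul_sign h ee hε1] at h1
    exact (le_abs_self _).trans h1
  have hCv : ∀ (k : ℕ) (w : Fin k → FW) (h : Fin k → StrongDual ℝ FZ),
      ∑ l, |h l (Tv (w l))| ≤ Kv * (strongLp p w * weakLp q h) :=
    strongly_extend hp1 hq hFW.dense_span Tv hKv.le hBv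
  -- conclusion
  refine ⟨Ku * Kv, mul_pos hKu hKv, fun k x y f => ?_⟩
  set T : FY →L[ℝ] FZ := Tv.comp Tu with hT
  have hTδ : ∀ xx : Y, T (δY xx) = δZ (v (u xx)) := by
    intro xx
    rw [hT, ContinuousLinearMap.comp_apply, hTu, hTv]
  set Bf : TensorProduct ℝ FY (StrongDual ℝ FZ) →ₗ[ℝ] ℝ :=
    TensorProduct.lift (LinearMap.mk₂ ℝ (fun e φ => φ (T e))
      (fun e e' φ => by simp)
      (fun c e φ => by simp)
      (fun e φ φ' => by simp)
      (fun c e φ => by simp)) with hBf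
  have hBftmul : ∀ (e : FY) (φ : StrongDual ℝ FZ), Bf (e ⊗ₜ[ℝ] φ) = φ (T e) := by
    intro e φ
    rw [hBf, TensorProduct.lift.tmul, LinearMap.mk₂_apply]
  set z := ∑ l, (δY (x l) - δY (y l)) ⊗ₜ[ℝ] f l with hz
  have hBz : Bf z = ∑ l, (f l (δZ ((v ∘ u) (x l))) - f l (δZ ((v ∘ u) (y l)))) := by
    rw [hz, map_sum]
    refine Finset.sum_congr rfl fun l _ => ?_
    rw [hBftmul, map_sub, map_sub]
    rw [hTδ, hTδ]
    rfl
  have hrep : ∀ (mr : ℕ) (nr : Fin mr → FY) (hr : Fin mr → StrongDual ℝ FZ),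
      z = ∑ j, nr j ⊗ₜ[ℝ] hr j →
      |Bf z| ≤ (Ku * Kv) * (weakLp p nr * weakLp q hr) := by
    intro mr nr hr hzz
    rw [hzz, map_sum]
    have h1 : |∑ j, Bf (nr j ⊗ₜ[ℝ] hr j)| ≤ ∑ j, |hr j (Tv (Tu (nr j)))| := by
      refine (Finset.abs_sum_le_sum_abs _ _).trans (le_of_eq ?_)
      refine Finset.sum_congr rfl fun j _ => ?_
      rw [hBftmul]
      rfl
    refine h1.trans ?_
    have h2 := hCv mr (fun j => Tu (nr j)) hr
    refine h2.trans ?_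
    have h3 : strongLp p (fun j => Tu (nr j)) ≤ Ku * weakLp p nr := hCu mr nr
    have hwq : 0 ≤ weakLp q hr := weakLp_nonneg hq hr
    calc Kv * (strongLp p (fun j => Tu (nr j)) * weakLp q hr) ≤
        Kv * (Ku * weakLp p nr * weakLp q hr) :=
          mul_le_mul_of_nonneg_left (mul_le_mul_of_nonneg_right h3 hwq) hKv.le
      _ = (Ku * Kv) * (weakLp p nr * weakLp q hr) := by ring
  have hKKpos : 0 < Ku * Kv := mul_pos hKu hKv
  have hne : {r : ℝ | ∃ (mr : ℕ) (nr : Fin mr → FY) (hr : Fin mr → StrongDual ℝ FZ),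
      z = ∑ j, nr j ⊗ₜ[ℝ] hr j ∧ r = weakLp p nr * weakLp q hr}.Nonempty :=
    ⟨weakLp p (fun l => δY (x l) - δY (y l)) * weakLp q f,
      k, (fun l => δY (x l) - δY (y l)), f, rfl, rfl⟩
  have hlow : |Bf z| / (Ku * Kv) ≤ wpNorm p q z := by
    refine le_csInf hne ?_
    rintro r ⟨mr, nr, hr, hzz, rfl⟩
    rw [div_le_iff₀ hKKpos]
    calc |Bf z| ≤ (Ku * Kv) * (weakLp p nr * weakLp q hr) := hrep mr nr hr hzz
      _ = (weakLp p nr * weakLp q hr) * (Ku * Kv) := by ring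
  have hgoal : |Bf z| ≤ (Ku * Kv) * wpNorm p q z := by
    calc |Bf z| = (Ku * Kv) * (|Bf z| / (Ku * Kv)) := by field_simp
      _ ≤ (Ku * Kv) * wpNorm p q z := mul_le_mul_of_nonneg_left hlow hKKpos.le
  rw [← hBz]
  exact hgoal
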